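/- Let A be a unital C*-algebra and let a ∈ A be an invertible self-adjoint element. Then the function x ↦ (a² + x²·1)⁻¹ from [0,∞) to A is Bochner integrable, and (2/π)·∫₀^∞ (a² + x²·1)⁻¹ dx = |a|⁻¹, where |a| denotes the positive square root of a² given by the continuous functional calculus. -/

import Mathlib

open MeasureTheory

lemma aux_integrable {t : ℝ} (ht : 0 < t) :
    Integrable (fun x : ℝ => (t + x ^ 2)⁻¹) := by
  have hs : (0:ℝ) < Real.sqrt t := Real.sqrt_pos.mpr ht
  have key : (fun x : ℝ => (t + x ^ 2)⁻¹)
      = fun x => t⁻¹ * (1 + ((Real.sqrt t)⁻¹ * x) ^ 2)⁻¹ := by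
    funext x
    rw [← mul_inv, mul_pow, ← Real.sq_sqrt ht.le]
    congr 1
    field_simp
    rw [Real.sqrt_sq hs.le]; ring
  rw [key]
  exact ((MeasureTheory.integrable_comp_mul_left_iff
    (fun y : ℝ => (1 + y ^ 2)⁻¹) (inv_ne_zero hs.ne')).2 integrable_inv_one_add_sq).const_mul _

lemma aux_integral {t : ℝ} (ht : 0 < t) :
    ∫ x in Set.Ioi (0:ℝ), (t + x ^ 2)⁻¹ = Real.pi / (2 * Real.sqrt t) := by
  have hs : (0:ℝ) < Real.sqrt t := Real.sqrt_pos.mpr ht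
  have key : ∀ x : ℝ, (t + x ^ 2)⁻¹ = t⁻¹ * (1 + ((Real.sqrt t)⁻¹ * x) ^ 2)⁻¹ := by
    intro x
    rw [← mul_inv, mul_pow, ← Real.sq_sqrt ht.le]
    congr 1
    field_simp
    rw [Real.sqrt_sq hs.le]; ring
  simp_rw [key]
  rw [integral_const_mul, integral_comp_mul_left_Ioi (fun y => (1 + y ^ 2)⁻¹) 0 (inv_pos.mpr hs),
    mul_zero, integral_Ioi_inv_one_add_sq, Real.arctan_zero, sub_zero]
  rw [smul_eq_mul, ← Real.sq_sqrt ht.le]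
  field_simp
  rw [Real.sqrt_sq hs.le]

/-- For an invertible self-adjoint element `a` of a unital C*-algebra,
`x ↦ (a² + x²·1)⁻¹` is Bochner integrable on `[0, ∞)` and
`(2/π)·∫₀^∞ (a² + x²·1)⁻¹ dx = |a|⁻¹`, where `|a|` is the positive square root of `a²`. -/
theorem integral_formula_for_abs_inv {A : Type*} [CStarAlgebra A] [PartialOrder A]
    [StarOrderedRing A]
    (a : A) (hasa : IsSelfAdjoint a) (hau : IsUnit a) :
    IntegrableOn (fun x : ℝ => Ring.inverse (a ^ 2 + x ^ 2 • (1 : A))) (Set.Ici 0) ∧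
      ((2 / Real.pi) • ∫ x in Set.Ici (0 : ℝ), Ring.inverse (a ^ 2 + x ^ 2 • (1 : A))) =
        Ring.inverse (CFC.sqrt (a ^ 2)) := by
  rcases subsingleton_or_nontrivial A with hA | hA
  · refine ⟨?_, Subsingleton.elim _ _⟩
    have h0 : (fun x : ℝ => Ring.inverse (a ^ 2 + x ^ 2 • (1 : A))) = fun _ => 0 :=
      funext fun _ => Subsingleton.elim _ _
    rw [h0]
    exact integrableOn_zero
  set b := a ^ 2 with hbdef
  have hbsa : IsSelfAdjoint b := hasa.pow 2
  have hb0 : (0 : A) ≤ b := by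
    rw [hbdef, sq]
    nth_rewrite 1 [← hasa.star_eq]
    exact star_mul_self_nonneg a
  have hbu : IsUnit b := hau.pow 2
  have hKne : (spectrum ℝ b).Nonempty := ContinuousFunctionalCalculus.spectrum_nonempty b hbsa
  have hKc : IsCompact (spectrum ℝ b) := spectrum.isCompact b
  set ε := sInf (spectrum ℝ b) with hεdef
  have hεK : ε ∈ spectrum ℝ b := hKc.sInf_mem hKne
  have hε0 : 0 < ε := by
    rcases (spectrum_nonneg_of_nonneg hb0 hεK).lt_or_eq with h | h
    · exact h
    · exact absurd (h ▸ hεK) (spectrum.zero_notMem ℝ hbu)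
  have hεle : ∀ t ∈ spectrum ℝ b, ε ≤ t := fun t ht => csInf_le hKc.bddBelow ht
  have hpos : ∀ (x : ℝ) (t : ℝ), t ∈ spectrum ℝ b → 0 < t + x ^ 2 := fun x t ht =>
    add_pos_of_pos_of_nonneg (hε0.trans_le (hεle t ht)) (sq_nonneg x)
  have hcont : ∀ x : ℝ, ContinuousOn (fun t : ℝ => (t + x ^ 2)⁻¹) (spectrum ℝ b) := fun x =>
    (continuousOn_id.add continuousOn_const).inv₀ fun t ht => (hpos x t ht).ne'
  set G : ℝ → C(spectrum ℝ b, ℝ) := fun x => ⟨_, (hcont x).restrict⟩ with hGdef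
  -- rewrite the integrand
  have hmem : ∀ x : ℝ, Ring.inverse (b + x ^ 2 • (1 : A)) = cfcHom hbsa (G x) := by
    intro x
    have h1 : b + x ^ 2 • (1 : A) = cfc (fun t : ℝ => t + x ^ 2) b := by
      rw [cfc_add b _ _, cfc_id' ℝ b, cfc_const (x ^ 2) b, Algebra.algebraMap_eq_smul_one]
    rw [h1, ← cfc_inv (fun t : ℝ => t + x ^ 2) b (fun t ht => (hpos x t ht).ne'),
      cfc_apply (fun t : ℝ => (t + x ^ 2)⁻¹) b hbsa (hcont x)]
  -- continuity of G
  have hGc : Continuous G := by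
    apply ContinuousMap.continuous_of_continuous_uncurry
    apply Continuous.inv₀
    · exact (continuous_subtype_val.comp continuous_snd).add
        ((continuous_pow 2).comp continuous_fst)
    · exact fun p => (hpos p.1 p.2 p.2.2).ne'
  -- integrability of G
  have hGnorm : ∀ x : ℝ, ‖G x‖ ≤ (ε + x ^ 2)⁻¹ := by
    intro x
    refine (ContinuousMap.norm_le _ (by positivity)).mpr fun t => ?_
    rw [hGdef]
    simp only [ContinuousMap.coe_mk, Set.restrict_apply]
    rw [Real.norm_eq_abs, abs_of_pos (inv_pos.mpr (hpos x t t.2))]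
    exact inv_anti₀ (by positivity) (add_le_add_left (hεle t t.2) _)
  have hGint : IntegrableOn G (Set.Ici 0) :=
    Integrable.mono' (aux_integrable hε0).integrableOn
      hGc.aestronglyMeasurable.restrict (ae_of_all _ hGnorm)
  -- the continuous linear map
  let L : C(spectrum ℝ b, ℝ) →L[ℝ] A :=
    { toLinearMap := ((cfcHom hbsa (R := ℝ)) : C(spectrum ℝ b, ℝ) →⋆ₐ[ℝ] A).toAlgHom.toLinearMap,
      cont := (cfcHom_isClosedEmbedding hbsa).continuous }
  have hLG : ∀ f : C(spectrum ℝ b, ℝ), L f = cfcHom hbsa f := fun _ => rfl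
  have heq : ∀ x : ℝ, Ring.inverse (b + x ^ 2 • (1 : A)) = L (G x) := fun x =>
    (hmem x).trans (hLG (G x)).symm
  constructor
  · have : (fun x : ℝ => Ring.inverse (b + x ^ 2 • (1 : A))) = fun x => L (G x) := funext heq
    rw [this]
    exact L.integrable_comp hGint
  · -- compute the integral
    have hsqrtpos : ∀ t : spectrum ℝ b, 0 < Real.sqrt (t : ℝ) :=
      fun t => Real.sqrt_pos.mpr (hε0.trans_le (hεle t t.2))
    have hcg : ContinuousOn (fun t : ℝ => Real.pi / (2 * Real.sqrt t)) (spectrum ℝ b) := by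
      apply ContinuousOn.div continuousOn_const
      · exact (continuous_const.mul Real.continuous_sqrt).continuousOn
      · exact fun t ht => by have := hε0.trans_le (hεle t ht); positivity
    have hIG : (∫ x in Set.Ici (0:ℝ), G x) = ⟨_, hcg.restrict⟩ := by
      ext t
      rw [ContinuousMap.integral_apply hGint]
      have ht0 : 0 < (t : ℝ) := hε0.trans_le (hεle t t.2)
      simp only [hGdef, ContinuousMap.coe_mk, Set.restrict_apply]
      rw [MeasureTheory.integral_Ici_eq_integral_Ioi, aux_integral ht0]
    have hsqrtinv : ContinuousOn (fun t : ℝ => (Real.sqrt t)⁻¹) (spectrum ℝ b) :=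
      Real.continuous_sqrt.continuousOn.inv₀ fun t ht =>
        (Real.sqrt_pos.mpr (hε0.trans_le (hεle t ht))).ne'
    calc ((2 / Real.pi) • ∫ x in Set.Ici (0:ℝ), Ring.inverse (b + x ^ 2 • (1 : A)))
        = (2 / Real.pi) • ∫ x in Set.Ici (0:ℝ), L (G x) := by simp_rw [heq]
      _ = (2 / Real.pi) • L (∫ x in Set.Ici (0:ℝ), G x) := by
          rw [L.integral_comp_comm hGint]
      _ = L ((2 / Real.pi) • (∫ x in Set.Ici (0:ℝ), G x)) := (L.map_smul _ _).symm
      _ = L ⟨_, hsqrtinv.restrict⟩ := by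
          congr 1
          rw [hIG]
          ext t
          simp only [ContinuousMap.smul_apply, ContinuousMap.coe_mk, Set.restrict_apply,
            smul_eq_mul]
          have ht0 : 0 < Real.sqrt (t : ℝ) := hsqrtpos t
          have hπ : Real.pi ≠ 0 := Real.pi_ne_zero
          field_simp
      _ = cfc (fun t : ℝ => (Real.sqrt t)⁻¹) b := by
          rw [hLG, cfc_apply (fun t : ℝ => (Real.sqrt t)⁻¹) b hbsa hsqrtinv]
      _ = Ring.inverse (cfc Real.sqrt b) :=
          cfc_inv Real.sqrt b fun t ht =>
            (Real.sqrt_pos.mpr (hε0.trans_le (hεle t ht))).ne'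
      _ = Ring.inverse (CFC.sqrt b) := by
          congr 1
          rw [CFC.sqrt_eq_cfc, cfc_nnreal_eq_real _ _ hb0]
          exact cfc_congr fun t ht => (Real.coe_sqrt.trans (by
            rw [Real.coe_toNNReal t (spectrum_nonneg_of_nonneg hb0 ht)])).symm
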